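/- (Thue–Morse spectrum) For the Laplacian Δ at s = s_0 = 1 on the Thue–Morse Bratteli diagram (stationary diagram with two vertices per level, all cylinder measures μ[γ] = 2^{-n} for γ of length n, weights w(γ) = 2^{-n}), the nonzero eigenvalues are λ_n = −(2/3)(7·4^{n−1} − 1) for n ≥ 1, each with multiplicity 2^{n−1}, and they satisfy the recursion λ_{n+1} = 4 λ_n − 2. The corresponding eigenvectors are the Haar-type functions φ_{n,γ} = χ_γ − τ̃_n χ_γ for γ ∈ Π_n, where τ̃_n flips the n-th symbol of the path. -/
import Mathlib

private lemma chi_cast {M : Type*} (χ : ∀ n : ℕ, (Fin n → Bool) → M) {a b : ℕ}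
    (h : a = b) (f : Fin a → Bool) (g : Fin b → Bool)
    (hfg : ∀ i : Fin a, f i = g ⟨i.1, h ▸ i.2⟩) : χ a f = χ b g := by
  subst h
  congr 1
  funext i
  rw [hfg i]

private lemma geom_aux : ∀ N : ℕ,
    ∑ j ∈ Finset.range N, -((2:ℝ)^(2*j+1)) = -(2/3)*((4:ℝ)^N - 1) := by
  intro N
  induction N with
  | zero => simp
  | succ p ih =>
    rw [Finset.sum_range_succ, ih]
    have h : (2:ℝ)^(2*p+1) = 2 * 4^p := by
      rw [pow_succ, pow_mul]; norm_num; ring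
    rw [h, pow_succ]
    ring

/-- Thue–Morse spectrum: on the Thue–Morse Bratteli diagram,
paths of length `n` are binary words `γ : Fin n → Bool`, with cylinder
measures `μ[γ] = 2^{−n}`, weights `2^{−n}`, and `G(η) = 2^{−3k−2}` for
`|η| = k`; the Laplacian `Δ = Δ₁` acts on the characteristic functions
`χ n γ` by the Pearson–Bellissard formula. Then for `n ≥ 1` the Haar-type
functions `φ_{n,γ} = χ_γ − τ̃_n χ_γ` (τ̃_n flips the `n`-th symbol) are
eigenvectors with eigenvalue `λ_n = −(2/3)(7·4^{n−1} − 1)`, the eigenvalues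
satisfy `λ_{n+1} = 4λ_n − 2`, and the `λ_n`-eigenspace (the span of the
`φ_{n,γ}`, `γ ∈ Π_n`) has dimension `2^{n−1}`. -/
theorem stmt_19 (M : Type*) [AddCommGroup M] [Module ℝ M]
    (χ : ∀ n : ℕ, (Fin n → Bool) → M)
    (Δ : M →ₗ[ℝ] M)
    (hΔ : ∀ (n : ℕ) (γ : Fin n → Bool),
      Δ (χ n γ) = -∑ k : Fin n,
        ((2 : ℝ) ^ (3 * (k : ℕ) + 2)) •
          ((((2 : ℝ) ^ (k : ℕ))⁻¹ - ((2 : ℝ) ^ ((k : ℕ) + 1))⁻¹) • χ n γ -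
            ((2 : ℝ) ^ n)⁻¹ •
              (χ (k : ℕ) (fun i => γ ⟨i.1, lt_of_lt_of_le i.2 (le_of_lt k.2)⟩) -
               χ ((k : ℕ) + 1) (fun i => γ ⟨i.1, lt_of_lt_of_le i.2 k.2⟩))))
    (hind : ∀ n, LinearIndependent ℝ (χ n)) :
    (∀ n : ℕ, 1 ≤ n → ∀ γ : Fin n → Bool,
      Δ (χ n γ - χ n (fun i => if (i : ℕ) = n - 1 then !(γ i) else γ i)) =
        (-(2 / 3) * (7 * (4 : ℝ) ^ (n - 1) - 1)) •
          (χ n γ - χ n (fun i => if (i : ℕ) = n - 1 then !(γ i) else γ i))) ∧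
    (∀ n : ℕ, 1 ≤ n →
      -(2 / 3) * (7 * (4 : ℝ) ^ ((n + 1) - 1) - 1) =
        4 * (-(2 / 3) * (7 * (4 : ℝ) ^ (n - 1) - 1)) - 2) ∧
    (∀ n : ℕ, 1 ≤ n →
      Module.finrank ℝ (Submodule.span ℝ
        {v : M | ∃ γ : Fin n → Bool,
          v = χ n γ - χ n (fun i => if (i : ℕ) = n - 1 then !(γ i) else γ i)}) =
        2 ^ (n - 1)) := by
  refine ⟨?_, ?_, ?_⟩
  · -- eigenvector property
    intro n hn γ
    obtain ⟨m, rfl⟩ : ∃ m, n = m + 1 := ⟨n - 1, (Nat.succ_pred_eq_of_pos hn).symm⟩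
    simp only [Nat.add_sub_cancel]
    set γ' : Fin (m+1) → Bool := fun i => if (i : ℕ) = m then !(γ i) else γ i with hγ'
    have hne : ∀ j : Fin (m+1), (j : ℕ) ≠ m → γ' j = γ j := by
      intro j hj
      rw [hγ']
      exact if_neg hj
    rw [map_sub, hΔ, hΔ, neg_sub_neg, ← Finset.sum_sub_distrib]
    trans (∑ k : Fin (m+1),
      (if (k : ℕ) = m then -((2:ℝ)^(2*m+2)) else -((2:ℝ)^(2*(k:ℕ)+1))) •
        (χ (m+1) γ - χ (m+1) γ'))
    · refine Finset.sum_congr rfl fun k _ => ?_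
      have e1 : (fun i : Fin (k:ℕ) => γ' ⟨i.1, lt_of_lt_of_le i.2 (le_of_lt k.2)⟩)
          = (fun i : Fin (k:ℕ) => γ ⟨i.1, lt_of_lt_of_le i.2 (le_of_lt k.2)⟩) := by
        funext i
        exact hne ⟨i.1, lt_of_lt_of_le i.2 (le_of_lt k.2)⟩
          (Nat.ne_of_lt (lt_of_lt_of_le i.2 (Nat.lt_succ_iff.mp k.2)))
      rw [e1]
      by_cases hk : (k : ℕ) = m
      · rw [if_pos hk]
        have h1 : χ ((k:ℕ)+1) (fun i => γ ⟨i.1, lt_of_lt_of_le i.2 k.2⟩) = χ (m+1) γ :=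
          chi_cast χ (by omega) _ _ (fun i => rfl)
        have h1' : χ ((k:ℕ)+1) (fun i => γ' ⟨i.1, lt_of_lt_of_le i.2 k.2⟩) = χ (m+1) γ' :=
          chi_cast χ (by omega) _ _ (fun i => rfl)
        rw [h1, h1']
        have hc : (2:ℝ)^(3*(k:ℕ)+2) * (((2:ℝ)^(k:ℕ))⁻¹ - ((2:ℝ)^((k:ℕ)+1))⁻¹)
            = 2^(2*m+1) := by
          rw [hk]; field_simp; ring
        have ht : (2:ℝ)^(3*(k:ℕ)+2) * ((2:ℝ)^(m+1))⁻¹ = 2^(2*m+1) := by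
          rw [hk]; field_simp; ring
        trans (((2:ℝ)^(3*(k:ℕ)+2) * (((2:ℝ)^(k:ℕ))⁻¹ - ((2:ℝ)^((k:ℕ)+1))⁻¹)
            + (2:ℝ)^(3*(k:ℕ)+2) * ((2:ℝ)^(m+1))⁻¹) • (χ (m+1) γ' - χ (m+1) γ))
        · module
        · rw [hc, ht]; module
      · rw [if_neg hk]
        have e2 : (fun i : Fin ((k:ℕ)+1) => γ' ⟨i.1, lt_of_lt_of_le i.2 k.2⟩)
            = (fun i : Fin ((k:ℕ)+1) => γ ⟨i.1, lt_of_lt_of_le i.2 k.2⟩) := by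
          funext i
          refine hne ⟨i.1, lt_of_lt_of_le i.2 k.2⟩ (show (i : ℕ) ≠ m from ?_)
          have h1 : (i : ℕ) < (k:ℕ) + 1 := i.2
          have h2 : (k : ℕ) < m + 1 := k.2
          omega
        rw [e2]
        have hc : (2:ℝ)^(3*(k:ℕ)+2) * (((2:ℝ)^(k:ℕ))⁻¹ - ((2:ℝ)^((k:ℕ)+1))⁻¹)
            = 2^(2*(k:ℕ)+1) := by
          field_simp; ring
        trans (((2:ℝ)^(3*(k:ℕ)+2) * (((2:ℝ)^(k:ℕ))⁻¹ - ((2:ℝ)^((k:ℕ)+1))⁻¹)) •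
          (χ (m+1) γ' - χ (m+1) γ))
        · module
        · rw [hc]; module
    · rw [← Finset.sum_smul]
      congr 1
      rw [Fin.sum_univ_castSucc]
      have hlast : (if ((Fin.last m : Fin (m+1)) : ℕ) = m then -((2:ℝ)^(2*m+2))
          else -((2:ℝ)^(2*((Fin.last m : Fin (m+1)):ℕ)+1))) = -((2:ℝ)^(2*m+2)) :=
        if_pos rfl
      rw [hlast]
      have hcs : ∀ j : Fin m, (if ((Fin.castSucc j : Fin (m+1)) : ℕ) = m
          then -((2:ℝ)^(2*m+2)) else -((2:ℝ)^(2*((Fin.castSucc j : Fin (m+1)):ℕ)+1)))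
          = -((2:ℝ)^(2*(j:ℕ)+1)) :=
        fun j => if_neg (Nat.ne_of_lt j.2)
      rw [Finset.sum_congr rfl fun j _ => hcs j,
        Fin.sum_univ_eq_sum_range (fun j => -((2:ℝ)^(2*j+1))) m, geom_aux m]
      have h4 : (2:ℝ)^(2*m+2) = 4 * 4^m := by
        have h5 : (4:ℝ)^m = 2^(2*m) := by rw [pow_mul]; norm_num
        rw [h5, pow_succ, pow_succ]; ring
      rw [h4]
      ring
  · -- recursion
    intro n hn
    obtain ⟨m, rfl⟩ : ∃ m, n = m + 1 := ⟨n - 1, (Nat.succ_pred_eq_of_pos hn).symm⟩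
    simp only [Nat.add_sub_cancel]
    rw [pow_succ]
    ring
  · -- dimension
    intro n hn
    obtain ⟨m, rfl⟩ : ∃ m, n = m + 1 := ⟨n - 1, (Nat.succ_pred_eq_of_pos hn).symm⟩
    show Module.finrank ℝ (Submodule.span ℝ
        {v : M | ∃ γ : Fin (m+1) → Bool,
          v = χ (m+1) γ - χ (m+1) (fun i => if (i : ℕ) = m then !(γ i) else γ i)}) = 2 ^ m
    set b : (Fin m → Bool) → M :=
      fun δ => χ (m+1) (Fin.snoc δ false) - χ (m+1) (Fin.snoc δ true) with hbdef
    have hflip : ∀ (δ : Fin m → Bool) (c : Bool),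
        (fun i : Fin (m+1) => if (i : ℕ) = m then !((Fin.snoc δ c : Fin (m+1) → Bool) i)
            else (Fin.snoc δ c : Fin (m+1) → Bool) i)
          = (Fin.snoc δ (!c) : Fin (m+1) → Bool) := by
      intro δ c
      funext i
      refine Fin.lastCases ?_ ?_ i
      · simp [Fin.snoc_last]
      · intro j
        have hj : ((Fin.castSucc j : Fin (m+1)) : ℕ) ≠ m := by
          simpa using Nat.ne_of_lt j.2
        rw [if_neg hj]
        simp [Fin.snoc_castSucc]
    have hb : LinearIndependent ℝ b := by
      rw [Fintype.linearIndependent_iff]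
      intro g hg δ
      set hfun : (Fin (m+1) → Bool) → ℝ :=
        fun γ => (if γ (Fin.last m) then (-1:ℝ) else 1) * g (Fin.init γ) with hfdef
      have hsum : ∑ γ : Fin (m+1) → Bool, hfun γ • χ (m+1) γ = 0 := by
        rw [← Fintype.sum_equiv
          ((⟨fun p => Fin.snoc p.1 p.2, fun γ => (Fin.init γ, γ (Fin.last m)),
            fun p => by simp [Fin.init_snoc, Fin.snoc_last],
            fun γ => Fin.snoc_init_self γ⟩ : ((Fin m → Bool) × Bool) ≃ (Fin (m+1) → Bool)))
          (fun p => hfun (Fin.snoc p.1 p.2) • χ (m+1) (Fin.snoc p.1 p.2))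
          (fun γ => hfun γ • χ (m+1) γ) (fun p => rfl)]
        rw [Fintype.sum_prod_type]
        have hrow : ∀ δ : Fin m → Bool,
            (∑ c : Bool, hfun (Fin.snoc δ c) • χ (m+1) (Fin.snoc δ c)) = g δ • b δ := by
          intro δ
          rw [Fintype.sum_bool]
          simp [hfdef, hbdef, Fin.snoc_last, Fin.init_snoc]
          module
        rw [Finset.sum_congr rfl fun δ _ => hrow δ]
        exact hg
      have h0 := Fintype.linearIndependent_iff.mp (hind (m+1)) hfun hsum (Fin.snoc δ false)
      simpa [hfdef, Fin.snoc_last, Fin.init_snoc] using h0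
    have hspan : Submodule.span ℝ
        {v : M | ∃ γ : Fin (m+1) → Bool,
          v = χ (m+1) γ - χ (m+1) (fun i => if (i : ℕ) = m then !(γ i) else γ i)}
        = Submodule.span ℝ (Set.range b) := by
      apply le_antisymm
      · rw [Submodule.span_le]
        rintro v ⟨γ, rfl⟩
        have hγ := (Fin.snoc_init_self γ).symm
        cases hc : γ (Fin.last m) with
        | false =>
          rw [hc] at hγ
          rw [hγ, hflip (Fin.init γ) false, Bool.not_false]
          exact Submodule.subset_span ⟨Fin.init γ, rfl⟩
        | true =>
          rw [hc] at hγ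
          rw [hγ, hflip (Fin.init γ) true, Bool.not_true]
          have heq : χ (m+1) (Fin.snoc (Fin.init γ) true)
              - χ (m+1) (Fin.snoc (Fin.init γ) false) = -(b (Fin.init γ)) := by
            simp only [hbdef]; abel
          rw [heq]
          exact neg_mem (Submodule.subset_span ⟨Fin.init γ, rfl⟩)
      · rw [Submodule.span_le]
        rintro v ⟨δ, rfl⟩
        refine Submodule.subset_span ⟨Fin.snoc δ false, ?_⟩
        rw [hflip δ false, Bool.not_false]
    rw [hspan, finrank_span_eq_card hb]
    simp [Fintype.card_fun]
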